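/- Let A ∈ ℝ^{n×n} and let λ ∈ ℂ with |λ| = 1 be such that there exists z ∈ ℂⁿ with (A − λI)² z = 0 and (A − λI) z ≠ 0 (viewing A as a complex matrix). Then there exist a nonzero real vector v₀ ∈ ℝⁿ, a constant c₀ > 0, and k₀ ∈ ℕ such that ‖A^k v₀‖ ≥ c₀·k for all k ≥ k₀. -/

import Mathlib

open Matrix

namespace RDLG

variable {n : ℕ}

noncomputable def iR (v : Fin n → ℝ) : EuclideanSpace ℝ (Fin n) :=
  (WithLp.equiv 2 (Fin n → ℝ)).symm v

def reV (z : Fin n → ℂ) : Fin n → ℝ := fun i => (z i).re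
def imV (z : Fin n → ℂ) : Fin n → ℝ := fun i => (z i).im

lemma sqrt_dot (v : Fin n → ℝ) : Real.sqrt (v ⬝ᵥ v) = ‖iR v‖ := by
  rw [EuclideanSpace.norm_eq]; congr 1
  simp [dotProduct, iR, Real.norm_eq_abs, sq_abs, sq]

lemma iR_add (a b : Fin n → ℝ) : iR (a + b) = iR a + iR b := rfl
lemma iR_smul (c : ℝ) (a : Fin n → ℝ) : iR (c • a) = c • iR a := rfl
lemma iR_zero : iR (0 : Fin n → ℝ) = 0 := rfl

lemma iR_cont : Continuous (iR (n := n)) :=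
  (PiLp.continuousLinearEquiv 2 ℝ (fun _ : Fin n => ℝ)).symm.continuous

lemma iR_ne_zero {v : Fin n → ℝ} (h : v ≠ 0) : iR v ≠ 0 := by
  intro h0
  exact h ((WithLp.equiv 2 (Fin n → ℝ)).symm.injective (h0.trans iR_zero.symm))

lemma reV_mulVec (A : Matrix (Fin n) (Fin n) ℝ) (z : Fin n → ℂ) :
    reV ((A.map Complex.ofReal).mulVec z) = A.mulVec (reV z) := by
  funext i
  simp [reV, Matrix.mulVec, dotProduct, Complex.re_sum, Matrix.map_apply]

lemma imV_mulVec (A : Matrix (Fin n) (Fin n) ℝ) (z : Fin n → ℂ) :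
    imV ((A.map Complex.ofReal).mulVec z) = A.mulVec (imV z) := by
  funext i
  simp [imV, Matrix.mulVec, dotProduct, Complex.im_sum, Matrix.map_apply]

lemma reV_add (a b : Fin n → ℂ) : reV (a + b) = reV a + reV b := by
  funext i; simp [reV]

lemma imV_add (a b : Fin n → ℂ) : imV (a + b) = imV a + imV b := by
  funext i; simp [imV]

lemma reV_smul (c : ℂ) (z : Fin n → ℂ) :
    reV (c • z) = c.re • reV z - c.im • imV z := by
  funext i; simp [reV, imV, Complex.mul_re]

lemma imV_smul (c : ℂ) (z : Fin n → ℂ) :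
    imV (c • z) = c.im • reV z + c.re • imV z := by
  funext i; simp [reV, imV, Complex.mul_im]; ring

lemma reV_real_smul (r : ℝ) (z : Fin n → ℂ) :
    reV ((r : ℂ) • z) = r • reV z := by
  rw [reV_smul]; simp

lemma map_ofReal_pow (A : Matrix (Fin n) (Fin n) ℝ) (k : ℕ) :
    (A.map Complex.ofReal) ^ k = (A ^ k).map Complex.ofReal := by
  induction k with
  | zero => simp [Matrix.map_one]
  | succ k ih => rw [pow_succ, pow_succ, ih]; exact (Matrix.map_mul (f := Complex.ofRealHom)).symm

lemma pow_formula (B : Matrix (Fin n) (Fin n) ℂ) (lam : ℂ) (z w : Fin n → ℂ)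
    (hz : B.mulVec z = lam • z + w) (hw : B.mulVec w = lam • w) (k : ℕ) :
    (B ^ (k + 1)).mulVec z = lam ^ (k + 1) • z + (((k : ℂ) + 1) * lam ^ k) • w := by
  induction k with
  | zero => simpa using hz
  | succ k ih =>
    have hstep : (B ^ (k + 2)).mulVec z = B.mulVec ((B ^ (k + 1)).mulVec z) := by
      rw [pow_succ', Matrix.mulVec_mulVec]
    rw [hstep, ih, Matrix.mulVec_add, Matrix.mulVec_smul, Matrix.mulVec_smul, hz, hw]
    push_cast
    match_scalars <;> ring

lemma lower_bound_norm (a b : EuclideanSpace ℝ (Fin n)) : ‖b‖ - ‖a‖ ≤ ‖a + b‖ := by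
  have h := norm_add_le (a + b) (-a)
  simp at h
  linarith

lemma pow_real_formula (A : Matrix (Fin n) (Fin n) ℝ) (μ : ℝ) (x u : Fin n → ℝ)
    (hx : A.mulVec x = μ • x + u) (heig : A.mulVec u = μ • u) (k : ℕ) :
    (A ^ (k + 1)).mulVec x = μ ^ (k + 1) • x + (((k : ℝ) + 1) * μ ^ k) • u := by
  induction k with
  | zero => simpa using hx
  | succ k ih =>
    have hstep : (A ^ (k + 2)).mulVec x = A.mulVec ((A ^ (k + 1)).mulVec x) := by
      rw [pow_succ', Matrix.mulVec_mulVec]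
    rw [hstep, ih, Matrix.mulVec_add, Matrix.mulVec_smul, Matrix.mulVec_smul, hx, heig]
    push_cast
    match_scalars <;> ring

lemma real_grow_est (A : Matrix (Fin n) (Fin n) ℝ) (μ : ℝ) (hμ : |μ| = 1) (x u : Fin n → ℝ)
    (hx : A.mulVec x = μ • x + u) (heig : A.mulVec u = μ • u) :
    ∀ k : ℕ, 1 ≤ k → (k : ℝ) * ‖iR u‖ - ‖iR x‖ ≤ ‖iR ((A ^ k).mulVec x)‖ := by
  intro k hk
  obtain ⟨j, rfl⟩ : ∃ j, k = j + 1 := ⟨k - 1, by omega⟩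
  rw [pow_real_formula A μ x u hx heig j, iR_add, iR_smul, iR_smul]
  have h1 : ‖(μ ^ (j + 1)) • iR x‖ = ‖iR x‖ := by
    rw [norm_smul, Real.norm_eq_abs, abs_pow, hμ, one_pow, one_mul]
  have h2 : ‖(((j : ℝ) + 1) * μ ^ j) • iR u‖ = ((j : ℝ) + 1) * ‖iR u‖ := by
    rw [norm_smul, Real.norm_eq_abs, abs_mul, abs_pow, hμ, one_pow, mul_one,
      abs_of_nonneg (by positivity)]
  have h3 := lower_bound_norm ((μ ^ (j + 1)) • iR x) ((((j : ℝ) + 1) * μ ^ j) • iR u)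
  rw [h1, h2] at h3
  push_cast
  linarith

lemma norm_iR_reV_le (c : ℂ) (hc : ‖c‖ = 1) (z : Fin n → ℂ) :
    ‖iR (reV (c • z))‖ ≤ Real.sqrt (∑ i, ‖z i‖ ^ 2) := by
  rw [EuclideanSpace.norm_eq]
  apply Real.sqrt_le_sqrt
  apply Finset.sum_le_sum
  intro i _
  have h1 : (iR (reV (c • z))) i = (c * z i).re := rfl
  rw [h1]
  have h2 : |(c * z i).re| ≤ ‖c * z i‖ := Complex.abs_re_le_norm _
  have h3 : ‖c * z i‖ = ‖z i‖ := by rw [norm_mul, hc, one_mul]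
  rw [Real.norm_eq_abs, sq_abs]
  calc (c * z i).re ^ 2 = |(c * z i).re| ^ 2 := (sq_abs _).symm
    _ ≤ ‖z i‖ ^ 2 := by rw [← h3]; exact pow_le_pow_left₀ (abs_nonneg _) h2 2

lemma grow (A : Matrix (Fin n) (Fin n) ℝ) (v : Fin n → ℝ) (m C : ℝ) (hm : 0 < m) (hC : 0 ≤ C)
    (h : ∀ k : ℕ, 1 ≤ k → (k : ℝ) * m - C ≤ ‖iR ((A ^ k).mulVec v)‖) :
    ∃ (v₀ : Fin n → ℝ) (c₀ : ℝ) (k₀ : ℕ), v₀ ≠ 0 ∧ 0 < c₀ ∧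
      ∀ k : ℕ, k₀ ≤ k → c₀ * k ≤ Real.sqrt ((A ^ k).mulVec v₀ ⬝ᵥ (A ^ k).mulVec v₀) := by
  refine ⟨v, m / 2, ⌈2 * C / m⌉₊ + 1, ?_, by positivity, ?_⟩
  · rintro rfl
    set N := ⌈C / m⌉₊ + 1 with hN
    have h1 := h N (by omega)
    have h2 : (A ^ N).mulVec (0 : Fin n → ℝ) = 0 := Matrix.mulVec_zero _
    rw [h2] at h1
    have h3 : ‖iR (0 : Fin n → ℝ)‖ = 0 := by
      rw [iR_zero, norm_zero]
    rw [h3] at h1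
    have h4 : C / m ≤ (⌈C / m⌉₊ : ℝ) := Nat.le_ceil _
    have h5 : (N : ℝ) = (⌈C / m⌉₊ : ℝ) + 1 := by push_cast [hN]; ring
    have h6 : C / m * m = C := div_mul_cancel₀ C (ne_of_gt hm)
    nlinarith
  · intro k hk
    have hk1 : 1 ≤ k := by omega
    rw [sqrt_dot]
    have h1 := h k hk1
    have h4 : 2 * C / m ≤ (⌈2 * C / m⌉₊ : ℝ) := Nat.le_ceil _
    have h5 : (⌈2 * C / m⌉₊ : ℝ) + 1 ≤ (k : ℝ) := by exact_mod_cast hk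
    have h6 : 2 * C / m * m = 2 * C := div_mul_cancel₀ _ (ne_of_gt hm)
    nlinarith

lemma exists_min (lam : ℂ) (him : lam.im ≠ 0)
    (A : Matrix (Fin n) (Fin n) ℝ) (w : Fin n → ℂ) (hw0 : w ≠ 0)
    (hw : (A.map Complex.ofReal).mulVec w = lam • w) :
    ∃ m : ℝ, 0 < m ∧ ∀ c : ℂ, ‖c‖ = 1 → m ≤ ‖iR (reV (c • w))‖ := by
  set F : ℂ → ℝ := fun c => ‖iR (reV (c • w))‖ with hF
  have hcont : Continuous F := by
    apply Continuous.norm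
    apply iR_cont.comp
    apply continuous_pi
    intro i
    exact Complex.continuous_re.comp ((continuous_id.mul continuous_const))
  obtain ⟨c₀, hc₀mem, hmin⟩ :=
    (isCompact_sphere (0 : ℂ) 1).exists_isMinOn ⟨1, by simp⟩ hcont.continuousOn
  refine ⟨F c₀, ?_, fun c hc => hmin (by simp [hc])⟩
  rcases (norm_nonneg (iR (reV (c₀ • w)))).lt_or_eq with h | h
  · exact h
  · exfalso
    have hre : reV (c₀ • w) = 0 := by
      by_contra hne
      exact iR_ne_zero hne (norm_eq_zero.mp h.symm)
    have hBg : (A.map Complex.ofReal).mulVec (c₀ • w) = lam • (c₀ • w) := by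
      rw [Matrix.mulVec_smul, hw, smul_comm]
    have hre2 := congrArg reV hBg
    rw [reV_mulVec, hre, reV_smul lam, hre] at hre2
    simp only [Matrix.mulVec_zero, smul_zero, zero_sub] at hre2
    have him0 : imV (c₀ • w) = 0 := by
      have h5 := hre2.symm
      rwa [neg_eq_zero, smul_eq_zero_iff_right him] at h5
    have hgz : c₀ • w = 0 := by
      funext i
      exact Complex.ext (congrFun hre i) (congrFun him0 i)
    have hc₀ne : c₀ ≠ 0 := by
      intro h0
      rw [h0] at hc₀mem
      simp at hc₀mem
    exact hw0 (by rwa [smul_eq_zero_iff_right hc₀ne] at hgz)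

end RDLG

open RDLG in
/-- If the complexification of the real matrix `A` has a Jordan block of size at least two
for a unit-modulus eigenvalue `λ` (witnessed by a generalized eigenvector `z` of rank two),
then some nonzero real direction grows at least linearly: `‖A^k v₀‖ ≥ c₀·k` for all
large `k` (Euclidean norm). -/
theorem real_direction_linear_growth {n : ℕ} (A : Matrix (Fin n) (Fin n) ℝ) (lam : ℂ)
    (hmod : ‖lam‖ = 1)
    (hz : ∃ z : Fin n → ℂ,
      ((A.map (Complex.ofReal) - lam • (1 : Matrix (Fin n) (Fin n) ℂ)) ^ 2).mulVec z = 0 ∧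
      (A.map (Complex.ofReal) - lam • (1 : Matrix (Fin n) (Fin n) ℂ)).mulVec z ≠ 0) :
    ∃ (v₀ : Fin n → ℝ) (c₀ : ℝ) (k₀ : ℕ), v₀ ≠ 0 ∧ 0 < c₀ ∧
      ∀ k : ℕ, k₀ ≤ k →
        c₀ * k ≤ Real.sqrt ((A ^ k).mulVec v₀ ⬝ᵥ (A ^ k).mulVec v₀) := by
  obtain ⟨z, h2, h1⟩ := hz
  have hNz : (A.map Complex.ofReal - lam • 1).mulVec z
      = (A.map Complex.ofReal).mulVec z - lam • z := by
    rw [Matrix.sub_mulVec, Matrix.smul_mulVec, Matrix.one_mulVec]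
  set w : Fin n → ℂ := (A.map Complex.ofReal - lam • 1).mulVec z with hwdef
  have hw0 : w ≠ 0 := h1
  have hz' : (A.map Complex.ofReal).mulVec z = lam • z + w := by
    rw [hNz]; abel
  have hNw : (A.map Complex.ofReal - lam • 1).mulVec w = 0 := by
    rw [hwdef, Matrix.mulVec_mulVec, ← pow_two]
    exact h2
  have hw' : (A.map Complex.ofReal).mulVec w = lam • w := by
    have h4 : (A.map Complex.ofReal - lam • 1).mulVec w
        = (A.map Complex.ofReal).mulVec w - lam • w := by
      rw [Matrix.sub_mulVec, Matrix.smul_mulVec, Matrix.one_mulVec]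
    rw [h4] at hNw
    exact sub_eq_zero.mp hNw
  by_cases him : lam.im = 0
  · -- λ is real, hence λ = ±1
    have hnormsq : lam.re ^ 2 + lam.im ^ 2 = 1 := by
      have h := congrArg (· ^ 2) hmod
      simp only [Complex.sq_norm, Complex.normSq_apply, one_pow] at h
      simpa [sq] using h
    have hμ2 : lam.re ^ 2 = 1 := by rw [him] at hnormsq; simpa using hnormsq
    have hμ : |lam.re| = 1 := by
      have h2' : (lam.re - 1) * (lam.re + 1) = 0 := by nlinarith
      rcases mul_eq_zero.mp h2' with h3 | h3
      · have : lam.re = 1 := by linarith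
        simp [this]
      · have : lam.re = -1 := by linarith
        simp [this]
    have hAx : A.mulVec (reV z) = lam.re • reV z + reV w := by
      have h := congrArg reV hz'
      rw [reV_mulVec, reV_add, reV_smul, him] at h
      simpa using h
    have hAy : A.mulVec (imV z) = lam.re • imV z + imV w := by
      have h := congrArg imV hz'
      rw [imV_mulVec, imV_add, imV_smul, him] at h
      simpa using h
    have hAu : A.mulVec (reV w) = lam.re • reV w := by
      have h := congrArg reV hw'
      rw [reV_mulVec, reV_smul, him] at h
      simpa using h
    have hAuu : A.mulVec (imV w) = lam.re • imV w := by
      have h := congrArg imV hw'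
      rw [imV_mulVec, imV_smul, him] at h
      simpa using h
    have hcases : reV w ≠ 0 ∨ imV w ≠ 0 := by
      by_contra hc
      push_neg at hc
      exact hw0 (funext fun i => Complex.ext (congrFun hc.1 i) (congrFun hc.2 i))
    rcases hcases with h | h
    · exact grow A (reV z) _ _ (norm_pos_iff.mpr (iR_ne_zero h)) (norm_nonneg _)
        (real_grow_est A lam.re hμ (reV z) (reV w) hAx hAu)
    · exact grow A (imV z) _ _ (norm_pos_iff.mpr (iR_ne_zero h)) (norm_nonneg _)
        (real_grow_est A lam.re hμ (imV z) (imV w) hAy hAuu)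
  · -- λ not real
    obtain ⟨m, hm, hmin⟩ := exists_min lam him A w hw0 hw'
    apply grow A (reV z) m (Real.sqrt (∑ i, ‖z i‖ ^ 2)) hm (Real.sqrt_nonneg _)
    intro k hk
    obtain ⟨j, rfl⟩ : ∃ j, k = j + 1 := ⟨k - 1, by omega⟩
    have hform := pow_formula (A.map Complex.ofReal) lam z w hz' hw' j
    have hreal : (A ^ (j + 1)).mulVec (reV z)
        = reV (lam ^ (j + 1) • z) + ((j : ℝ) + 1) • reV (lam ^ j • w) := by
      rw [← reV_mulVec, ← map_ofReal_pow, hform, reV_add]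
      congr 1
      rw [mul_smul]
      have hcast : ((j : ℂ) + 1) = (((j : ℝ) + 1 : ℝ) : ℂ) := by push_cast; ring
      rw [hcast, reV_real_smul]
    rw [hreal, iR_add, iR_smul]
    have hb := hmin (lam ^ j) (by rw [norm_pow, hmod, one_pow])
    have ha := norm_iR_reV_le (lam ^ (j + 1)) (by rw [norm_pow, hmod, one_pow]) z
    have hlb := lower_bound_norm (iR (reV (lam ^ (j + 1) • z)))
      (((j : ℝ) + 1) • iR (reV (lam ^ j • w)))
    rw [norm_smul, Real.norm_eq_abs, abs_of_nonneg (by positivity)] at hlb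
    have hj1 : ((j : ℝ) + 1) * m ≤ ((j : ℝ) + 1) * ‖iR (reV (lam ^ j • w))‖ :=
      mul_le_mul_of_nonneg_left hb (by positivity)
    push_cast
    linarith
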